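/- Explicit formula for the infimal coercivity function: let Υ(u) := inf_{λ ∈ [0,1)} [ ((1 − λ)/2)·u² + H_λ(u + 1/2) + H_λ(1/2 − u) ] for u ≥ 0. Then Υ(u) = u²/2 for 0 ≤ u ≤ 4, while for u ≥ 4, setting λ*(u) := √(1 − (4u − 2)/(u² − 2)) ∈ [0,1), one has Υ(u) = (u²/2)(1 − λ*(u)) + (u − 1/2)·log( (1 + λ*(u))/(1 − λ*(u)) ) + λ*(u), and the infimum defining Υ(u) is attained at λ = λ*(u). -/

import Mathlib

/-- The regularized entropy `H_λ` (for `λ ∈ [0,1)`). -/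
noncomputable def Hlam (lam c : ℝ) : ℝ :=
  if c ≤ (1 - lam) / 2 then c * Real.log ((1 - lam) / (1 + lam)) + lam
  else if c ≤ (1 + lam) / 2 then c * Real.log (2 * c / (1 + lam)) - c + (1 + lam) / 2
  else 0

namespace UpsAux

lemma one_sub_inv_le_log {x : ℝ} (hx : 0 < x) : 1 - x⁻¹ ≤ Real.log x := by
  have h := Real.log_le_sub_one_of_pos (inv_pos.mpr hx)
  rw [Real.log_inv] at h; linarith

noncomputable def L (x : ℝ) : ℝ := Real.log (1 + x) - Real.log (1 - x)

lemma L_zero : L 0 = 0 := by simp [L]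

lemma continuousOn_L {a b : ℝ} (ha : -1 < a) (hb : b < 1) :
    ContinuousOn L (Set.Icc a b) := by
  apply ContinuousOn.sub
  · exact ContinuousOn.log (continuous_const.add continuous_id).continuousOn
      (fun x hx => (show (0:ℝ) < 1 + x by have := hx.1; linarith).ne')
  · exact ContinuousOn.log (continuous_const.sub continuous_id).continuousOn
      (fun x hx => (show (0:ℝ) < 1 - x by have := hx.2; linarith).ne')

lemma hasDerivAt_L {t : ℝ} (h1 : -1 < t) (h2 : t < 1) :
    HasDerivAt L (1/(1+t) + 1/(1-t)) t := by
  have ha : HasDerivAt (fun x : ℝ => Real.log (1 + x)) (1/(1+t)) t := by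
    simpa using ((hasDerivAt_id t).const_add 1).log (show (0:ℝ) < 1 + t by linarith).ne'
  have hb : HasDerivAt (fun x : ℝ => Real.log (1 - x)) (-1/(1-t)) t := by
    simpa using ((hasDerivAt_id t).const_sub 1).log (show (0:ℝ) < 1 - t by linarith).ne'
  have heq : (1:ℝ)/(1+t) + 1/(1-t) = 1/(1+t) - (-1/(1-t)) := by ring
  rw [heq]
  exact ha.sub hb

lemma tangent {m x : ℝ} (hm0 : 0 ≤ m) (hm1 : m < 1) (hx0 : 0 ≤ x) (hx1 : x < 1) :
    L m + 2/(1-m^2) * (x - m) ≤ L x := by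
  have hm2 : (0:ℝ) < 1 - m^2 := by nlinarith
  rcases lt_trichotomy m x with h | h | h
  · obtain ⟨c, hc, hceq⟩ := exists_hasDerivAt_eq_slope L (fun t => 1/(1+t) + 1/(1-t)) h
      (continuousOn_L (by linarith) (by linarith))
      (fun t ht => hasDerivAt_L (by have := ht.1; linarith) (by have := ht.2; linarith))
    have hc0 : 0 ≤ c := le_trans hm0 hc.1.le
    have hc1 : c < 1 := lt_trans hc.2 hx1
    have hc2 : (0:ℝ) < 1 - c^2 := by nlinarith
    have hslope : L x - L m = (1/(1+c) + 1/(1-c)) * (x - m) := by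
      rw [hceq, div_mul_cancel₀ _ (show x - m ≠ 0 by intro hh; linarith)]
    have e : 1/(1+c) + 1/(1-c) = 2/(1-c^2) := by
      rw [div_add_div _ _ (show (1:ℝ)+c ≠ 0 by intro hh; linarith) (show (1:ℝ)-c ≠ 0 by intro hh; nlinarith)]
      rw [show (1:ℝ) - c^2 = (1+c)*(1-c) by ring]
      congr 1; ring
    have hkey : 2/(1-m^2) ≤ 2/(1-c^2) := by
      rw [div_le_div_iff₀ hm2 hc2]
      nlinarith [hc.1]
    nlinarith [mul_le_mul_of_nonneg_right (hkey.trans_eq e.symm)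
      (show (0:ℝ) ≤ x - m by linarith)]
  · rw [h]; simp
  · obtain ⟨c, hc, hceq⟩ := exists_hasDerivAt_eq_slope L (fun t => 1/(1+t) + 1/(1-t)) h
      (continuousOn_L (by linarith) (by linarith))
      (fun t ht => hasDerivAt_L (by have := ht.1; linarith) (by have := ht.2; linarith))
    have hc0 : 0 ≤ c := le_trans hx0 hc.1.le
    have hc1 : c < 1 := lt_trans hc.2 hm1
    have hc2 : (0:ℝ) < 1 - c^2 := by nlinarith
    have hslope : L m - L x = (1/(1+c) + 1/(1-c)) * (m - x) := by
      rw [hceq, div_mul_cancel₀ _ (show m - x ≠ 0 by intro hh; linarith)]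
    have e : 1/(1+c) + 1/(1-c) = 2/(1-c^2) := by
      rw [div_add_div _ _ (show (1:ℝ)+c ≠ 0 by intro hh; linarith) (show (1:ℝ)-c ≠ 0 by intro hh; nlinarith)]
      rw [show (1:ℝ) - c^2 = (1+c)*(1-c) by ring]
      congr 1; ring
    have hkey : 2/(1-c^2) ≤ 2/(1-m^2) := by
      rw [div_le_div_iff₀ hc2 hm2]
      nlinarith [hc.2]
    nlinarith [mul_le_mul_of_nonneg_right (e.trans_le hkey)
      (show (0:ℝ) ≤ m - x by linarith)]


lemma Hlam_top {u lam : ℝ} (hu : 0 ≤ u) (hl0 : 0 ≤ lam) (hle : lam ≤ 2*u) :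
    Hlam lam (u + 1/2) = 0 := by
  unfold Hlam
  split_ifs with h1 h2
  · have hu0 : u = 0 := le_antisymm (by linarith) hu
    have hl : lam = 0 := le_antisymm (by linarith) hl0
    simp [hu0, hl]
  · have hl : lam = 2*u := le_antisymm hle (by linarith)
    rw [hl, show 2*(u+1/2)/(1+2*u) = (1+2*u)/(1+2*u) by ring]
    rw [div_self (show (1:ℝ)+2*u ≠ 0 by positivity)]
    simp only [Real.log_one, mul_zero, zero_sub]
    ring
  · rfl

lemma Hlam_bot {u lam : ℝ} (hle : lam ≤ 2*u) :
    Hlam lam (1/2 - u) = (1/2 - u) * Real.log ((1-lam)/(1+lam)) + lam := by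
  rw [Hlam, if_pos (by linarith)]

lemma Hlam_top2 {u lam : ℝ} (hu : 0 ≤ u) (hl0 : 0 ≤ lam) (h2 : 2*u ≤ lam) (hl1 : lam < 1) :
    Hlam lam (u+1/2) = (u+1/2) * Real.log ((1+2*u)/(1+lam)) - (u+1/2) + (1+lam)/2 := by
  unfold Hlam
  split_ifs with h1 hc
  · have hu0 : u = 0 := le_antisymm (by linarith) hu
    have hl : lam = 0 := le_antisymm (by linarith) hl0
    simp [hu0, hl]
  · rw [show 2*(u+1/2)/(1+lam) = (1+2*u)/(1+lam) by ring]
  · exact absurd (by linarith : u + 1/2 ≤ (1+lam)/2) hc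

lemma Hlam_bot2 {u lam : ℝ} (hu : 0 ≤ u) (hl0 : 0 ≤ lam) (h2 : 2*u ≤ lam) (hl1 : lam < 1) :
    Hlam lam (1/2-u) = (1/2-u) * Real.log ((1-2*u)/(1+lam)) - (1/2-u) + (1+lam)/2 := by
  unfold Hlam
  split_ifs with h1 hc
  · have hl : lam = 2*u := le_antisymm (by linarith) h2
    rw [hl]; ring
  · rw [show 2*(1/2-u)/(1+lam) = (1-2*u)/(1+lam) by ring]
  · exact absurd (by linarith : 1/2 - u ≤ (1+lam)/2) hc

noncomputable def fval (u lam : ℝ) : ℝ :=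
  (1 - lam)/2 * u^2 + Hlam lam (u + 1/2) + Hlam lam (1/2 - u)

lemma fval_case1 {u lam : ℝ} (hu : 0 ≤ u) (hl0 : 0 ≤ lam) (hl1 : lam < 1) (hle : lam ≤ 2*u) :
    fval u lam = (1-lam)/2*u^2 + (u - 1/2) * L lam + lam := by
  rw [fval, Hlam_top hu hl0 hle, Hlam_bot hle,
    Real.log_div (show (1:ℝ)-lam ≠ 0 by intro hh; linarith) (show (1:ℝ)+lam ≠ 0 by intro hh; linarith), L]
  ring

lemma fval_case2 {u lam : ℝ} (hu : 0 ≤ u) (hl0 : 0 ≤ lam) (hl1 : lam < 1) (h2 : 2*u ≤ lam) :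
    fval u lam = (1-lam)/2*u^2
      + ((1/2+u)*Real.log (1+2*u) + (1/2-u)*Real.log (1-2*u))
      + (lam - Real.log (1+lam)) := by
  have ha : (0:ℝ) < 1 + 2*u := by linarith
  have hb : (0:ℝ) < 1 - 2*u := by linarith
  have hc : (0:ℝ) < 1 + lam := by linarith
  rw [fval, Hlam_top2 hu hl0 h2 hl1, Hlam_bot2 hu hl0 h2 hl1,
    Real.log_div ha.ne' hc.ne', Real.log_div hb.ne' hc.ne']
  ring

lemma bound_le4_case1 {u lam : ℝ} (hu0 : 0 ≤ u) (hu4 : u ≤ 4) (hl0 : 0 ≤ lam) (hl1 : lam < 1)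
    (hle : lam ≤ 2*u) : u^2/2 ≤ fval u lam := by
  · rw [fval_case1 hu0 hl0 hl1 hle]
    rcases le_or_gt (1/2 : ℝ) u with hu2 | hu2
    · -- u ≥ 1/2 : use L lam ≥ 2 lam
      have h := tangent le_rfl one_pos hl0 hl1
      rw [L_zero] at h
      have hL : 2*lam ≤ L lam := by norm_num at h; linarith
      nlinarith [mul_le_mul_of_nonneg_left hL (show (0:ℝ) ≤ u - 1/2 by linarith),
        mul_nonneg hl0 (mul_nonneg hu0 (show (0:ℝ) ≤ 4 - u by linarith))]
    · -- u < 1/2 : use L lam ≤ 2 lam / (1 - lam^2)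
      have hD : (0:ℝ) < 1 - lam^2 := by nlinarith
      have h := tangent hl0 hl1 le_rfl one_pos
      rw [L_zero] at h
      have hL : L lam ≤ 2*lam/(1-lam^2) := by
        have e : 2/(1-lam^2) * (0 - lam) = -(2*lam/(1-lam^2)) := by ring
        rw [e] at h; linarith
      have hstep : (u-1/2)*(2*lam/(1-lam^2)) ≤ (u-1/2)*(L lam) :=
        mul_le_mul_of_nonpos_left hL (by linarith)
      have hlam2 : lam^2 ≤ 4*u^2 := by nlinarith
      have hpoly : (0:ℝ) ≤ 2 - 4.5*u + 2*u^3 := by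
        nlinarith [mul_nonneg (show (0:ℝ) ≤ 1/2 - u by linarith)
          (show (0:ℝ) ≤ 4 - u - 2*u^2 by nlinarith)]
      have h3 : (0:ℝ) ≤ (1-u^2/2)*(1-lam^2) - (1-2*u) := by
        nlinarith [mul_nonneg hu0 hpoly,
          mul_nonneg (show (0:ℝ) ≤ 1 - u^2/2 by nlinarith) (show (0:ℝ) ≤ 4*u^2 - lam^2 by linarith)]
      have key : lam*(1-2*u) ≤ lam*((1-u^2/2)*(1-lam^2)) := by nlinarith [mul_nonneg hl0 h3]
      have h4 : lam*(1-2*u)/(1-lam^2) ≤ lam*(1-u^2/2) := by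
        rw [div_le_iff₀ hD]; nlinarith [key]
      have e2 : (u-1/2)*(2*lam/(1-lam^2)) = -(lam*(1-2*u)/(1-lam^2)) := by ring
      nlinarith [hstep, h4, e2]

lemma bound_le4_case2 {u lam : ℝ} (hu0 : 0 ≤ u) (hl0 : 0 ≤ lam) (hl1 : lam < 1)
    (h2 : 2*u ≤ lam) : u^2/2 ≤ fval u lam := by
  · have hu2 : u < 1/2 := by linarith
    rw [fval_case2 hu0 hl0 hl1 h2]
    have ha : (0:ℝ) < 1 + 2*u := by linarith
    have hb : (0:ℝ) < 1 - 2*u := by linarith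
    -- C ≥ 0
    have hA := one_sub_inv_le_log ha
    have hB := one_sub_inv_le_log hb
    have hA' : u ≤ (1/2+u)*Real.log (1+2*u) := by
      have h := mul_le_mul_of_nonneg_left hA (show (0:ℝ) ≤ 1/2+u by linarith)
      have e : (1/2+u)*(1-(1+2*u)⁻¹) = u := by field_simp; ring
      linarith [e ▸ h]
    have hB' : -u ≤ (1/2-u)*Real.log (1-2*u) := by
      have h := mul_le_mul_of_nonneg_left hB (show (0:ℝ) ≤ 1/2-u by linarith)
      have e : (1/2-u)*(1-(1-2*u)⁻¹) = -u := by field_simp; ring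
      linarith [e ▸ h]
    -- lam - log(1+lam) ≥ (sqrt(1+lam)-1)^2
    set s1 := Real.sqrt (1+lam) with hs1def
    have hs1sq : s1^2 = 1+lam := Real.sq_sqrt (by linarith)
    have hs1ge : 1 ≤ s1 := Real.one_le_sqrt.mpr (by linarith)
    have hs1lt : s1 < 3/2 := by
      rw [hs1def]
      exact (Real.sqrt_lt' (by norm_num)).mpr (by nlinarith)
    have hloglam : Real.log (1+lam) ≤ 2*(s1 - 1) := by
      have h := Real.log_le_sub_one_of_pos (show (0:ℝ) < s1 by linarith)
      have e := Real.log_sqrt (show (0:ℝ) ≤ 1+lam by linarith)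
      rw [← hs1def] at e
      linarith
    have h5 : 2/5*lam ≤ s1 - 1 := by
      nlinarith [mul_nonneg (show (0:ℝ) ≤ s1 - 1 by linarith) (show (0:ℝ) ≤ 5/2 - (s1+1) by linarith)]
    have h6 : lam*u^2/2 ≤ (s1-1)^2 := by
      nlinarith [sq_nonneg (s1 - 1 - 2/5*lam), mul_nonneg hl0 (show (0:ℝ) ≤ lam - 2*u by linarith),
        mul_nonneg (mul_nonneg hl0 hu0) (show (0:ℝ) ≤ 16 - 25*u by linarith)]
    have h7 : (s1-1)^2 = lam - 2*(s1-1) := by nlinarith [hs1sq]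
    nlinarith [hA', hB', hloglam, h6, h7]

lemma bound_le4 {u lam : ℝ} (hu0 : 0 ≤ u) (hu4 : u ≤ 4) (hl0 : 0 ≤ lam) (hl1 : lam < 1) :
    u^2/2 ≤ fval u lam := by
  rcases le_or_gt lam (2*u) with hle | hgt
  · exact bound_le4_case1 hu0 hu4 hl0 hl1 hle
  · exact bound_le4_case2 hu0 hl0 hl1 hgt.le

lemma bound_ge4 {u lam s : ℝ} (hu : 4 ≤ u) (hl0 : 0 ≤ lam) (hl1 : lam < 1)
    (hs0 : 0 ≤ s) (hs1 : s < 1) (hseq : 1 - s^2 = (4*u-2)/(u^2-2)) :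
    fval u s ≤ fval u lam := by
  rw [fval_case1 (by linarith) hl0 hl1 (by linarith),
     fval_case1 (by linarith) hs0 hs1 (by linarith)]
  have ht := tangent hs0 hs1 hl0 hl1
  have hu2 : (0:ℝ) < u^2 - 2 := by nlinarith
  have hu1 : (0:ℝ) < 2*u - 1 := by linarith
  have hc : 2/(1-s^2) = (u^2-2)/(2*u-1) := by
    rw [hseq]
    rw [div_div_eq_mul_div, show 4*u-2 = 2*(2*u-1) by ring,
      show (2:ℝ)*(u^2-2) = (u^2-2)*2 by ring, ← div_div]
    rw [mul_div_assoc, div_self (two_ne_zero), mul_one]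
  have hm := mul_le_mul_of_nonneg_left ht (show (0:ℝ) ≤ u - 1/2 by linarith)
  have he : (u-1/2) * (2/(1-s^2)*(lam-s)) = (u^2-2)/2*(lam-s) := by
    rw [hc, show (u-1/2) * ((u^2-2)/(2*u-1)*(lam-s)) = ((2*u-1)/(2*u-1)) * ((u^2-2)/2*(lam-s)) by ring,
      div_self hu1.ne', one_mul]
  nlinarith [hm, he]

end UpsAux

open UpsAux

/-- The infimal coercivity function
`Υ(u) = inf_{λ ∈ [0,1)} [ ((1-λ)/2) u² + H_λ(u + 1/2) + H_λ(1/2 - u) ]`. -/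
noncomputable def Ups (u : ℝ) : ℝ :=
  ⨅ lam : Set.Ico (0:ℝ) 1,
    ((1 - (lam : ℝ)) / 2 * u ^ 2 + Hlam lam (u + 1/2) + Hlam lam (1/2 - u))

/-- Explicit formula for the infimal coercivity function: `Υ(u) = u²/2` for
`0 ≤ u ≤ 4`, and for `u ≥ 4` the infimum is attained at
`λ*(u) = √(1 - (4u-2)/(u²-2)) ∈ [0,1)` with the explicit value stated below. -/
theorem Ups_explicit_formula (u : ℝ) :
    (0 ≤ u → u ≤ 4 → Ups u = u ^ 2 / 2) ∧
    (4 ≤ u →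
      Real.sqrt (1 - (4 * u - 2) / (u ^ 2 - 2)) ∈ Set.Ico (0:ℝ) 1 ∧
      Ups u = u ^ 2 / 2 * (1 - Real.sqrt (1 - (4 * u - 2) / (u ^ 2 - 2)))
          + (u - 1/2) * Real.log ((1 + Real.sqrt (1 - (4 * u - 2) / (u ^ 2 - 2)))
              / (1 - Real.sqrt (1 - (4 * u - 2) / (u ^ 2 - 2))))
          + Real.sqrt (1 - (4 * u - 2) / (u ^ 2 - 2)) ∧
      Ups u = (1 - Real.sqrt (1 - (4 * u - 2) / (u ^ 2 - 2))) / 2 * u ^ 2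
          + Hlam (Real.sqrt (1 - (4 * u - 2) / (u ^ 2 - 2))) (u + 1/2)
          + Hlam (Real.sqrt (1 - (4 * u - 2) / (u ^ 2 - 2))) (1/2 - u)) := by
  have hUps : ∀ v : ℝ, Ups v = ⨅ lam : Set.Ico (0:ℝ) 1, fval v lam := by
    intro v; rfl
  constructor
  · intro hu0 hu4
    rw [hUps]
    have hbdd : BddBelow (Set.range (fun lam : Set.Ico (0:ℝ) 1 => fval u lam)) := by
      refine ⟨u^2/2, ?_⟩
      rintro x ⟨p, rfl⟩
      exact bound_le4 hu0 hu4 p.2.1 p.2.2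
    apply le_antisymm
    · have h0 : (0:ℝ) ∈ Set.Ico (0:ℝ) 1 := ⟨le_rfl, one_pos⟩
      have := ciInf_le hbdd (⟨0, h0⟩ : Set.Ico (0:ℝ) 1)
      have hv : fval u 0 = u^2/2 := by
        rw [fval_case1 hu0 le_rfl one_pos (by linarith), L_zero]; ring
      rw [hv] at this; exact this
    · exact le_ciInf (fun p => bound_le4 hu0 hu4 p.2.1 p.2.2)
  · intro hu4
    set S := Real.sqrt (1 - (4 * u - 2) / (u ^ 2 - 2)) with hSdef
    have hu2 : (0:ℝ) < u^2 - 2 := by nlinarith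
    have h42 : (0:ℝ) < 4*u - 2 := by linarith
    have hratio_pos : 0 < (4*u-2)/(u^2-2) := div_pos h42 hu2
    have hratio_le1 : (4*u-2)/(u^2-2) ≤ 1 := (div_le_one hu2).mpr (by nlinarith)
    have hin0 : (0:ℝ) ≤ 1 - (4*u-2)/(u^2-2) := by linarith
    have hs0 : 0 ≤ S := Real.sqrt_nonneg _
    have hs1 : S < 1 := by
      rw [hSdef]
      exact (Real.sqrt_lt' one_pos).mpr (by norm_num; linarith)
    have hssq : S^2 = 1 - (4*u-2)/(u^2-2) := by
      rw [hSdef]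
      exact Real.sq_sqrt (by norm_num; linarith)
    have hseq : 1 - S^2 = (4*u-2)/(u^2-2) := by rw [hssq]; ring
    have hmem : S ∈ Set.Ico (0:ℝ) 1 := ⟨hs0, hs1⟩
    have hval : Ups u = fval u S := by
      rw [hUps]
      have hbdd : BddBelow (Set.range (fun lam : Set.Ico (0:ℝ) 1 => fval u lam)) := by
        refine ⟨fval u S, ?_⟩
        rintro x ⟨p, rfl⟩
        exact bound_ge4 hu4 p.2.1 p.2.2 hs0 hs1 hseq
      apply le_antisymm
      · exact ciInf_le hbdd (⟨S, hmem⟩ : Set.Ico (0:ℝ) 1)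
      · exact le_ciInf (fun p => bound_ge4 hu4 p.2.1 p.2.2 hs0 hs1 hseq)
    refine ⟨hmem, ?_, ?_⟩
    · rw [hval, fval_case1 (by linarith) hs0 hs1 (by linarith),
        Real.log_div (show (1:ℝ)+S ≠ 0 by positivity) (show (1:ℝ)-S ≠ 0 by intro hh; nlinarith), L]
      ring
    · rw [hval]; rfl
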